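/- arXiv:1102.0309 — 2 statements merged into one kernel-verified Lean document; each statement's English description precedes it below -/
import Mathlib

section
/- Let T = (V,E) be an X-tree and, for each cord xy ∈ binom(X,2), let λ^T_{xy} : ℝ^E → ℝ be the linear map sending ω to the sum of ω(e) over the edges e of the path in T from x to y. Then a subset L of binom(X,2) is an edge-weight lasso for T if and only if X = ∪_{c∈L} c and the only map ω₀ ∈ ℝ^E satisfying λ^T_{xy}(ω₀) = 0 for all xy ∈ L is ω₀ = 0. -/
/- Common definitions for formalizing results of Dress, Huber & Steel,
   "Lassoing a phylogenetic tree I: Basic properties, shellings, and covers".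

   Trees are modelled as simple graphs on an ambient vertex type `U`;
   the vertex set of the tree is the support of the graph (every vertex of a
   tree with at least two vertices has degree >= 1). -/

noncomputable section
open scoped Classical

namespace Lasso

variable {U : Type}

/-- The degree of a vertex. -/
def deg (G : SimpleGraph U) (v : U) : ℕ := (G.neighborSet v).ncard

/-- A leaf is a vertex of degree `1`. -/
def IsLeaf (G : SimpleGraph U) (v : U) : Prop := deg G v = 1

/-- An interior vertex: a non-leaf vertex of the tree. -/
def Interior (G : SimpleGraph U) (v : U) : Prop := v ∈ G.support ∧ ¬ IsLeaf G v

/-- `G` is an `X`-tree: a finite tree without vertices of degree two whose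
    leaf set is exactly `X`. -/
structure IsXTree (X : Set U) (G : SimpleGraph U) : Prop where
  support_finite : G.support.Finite
  support_nonempty : G.support.Nonempty
  connected : ∀ a ∈ G.support, ∀ b ∈ G.support, G.Reachable a b
  acyclic : G.IsAcyclic
  no_deg_two : ∀ v : U, deg G v ≠ 2
  leaves_eq : X = {v : U | IsLeaf G v}

/-- An edge weighting of `G`: nonnegative, and zero away from the edges of `G`
    (so that it represents an element of `ℝ_{≥0}^E`). -/
structure IsWeighting (G : SimpleGraph U) (ω : Sym2 U → ℝ) : Prop where
  nonneg : ∀ e, 0 ≤ ω e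
  zero_off : ∀ e, e ∉ G.edgeSet → ω e = 0

/-- A proper edge weighting: in addition strictly positive on interior edges
    (edges both of whose endpoints are non-leaves). -/
structure IsProperWeighting (G : SimpleGraph U) (ω : Sym2 U → ℝ)
    extends IsWeighting G ω : Prop where
  interior_pos : ∀ e ∈ G.edgeSet, (∀ u ∈ e, ¬ IsLeaf G u) → 0 < ω e

/-- The set `E_T(x|y)` of edges separating `x` from `y`, i.e. the edges lying
    on every walk from `x` to `y` (in a tree: the edges of the path). -/
def pathEdges (G : SimpleGraph U) (x y : U) : Set (Sym2 U) :=
  {e | e ∈ G.edgeSet ∧ ∀ p : G.Walk x y, e ∈ p.edges}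

/-- The induced distance `D_ω(x,y)`. -/
def tdist (G : SimpleGraph U) (ω : Sym2 U → ℝ) (x y : U) : ℝ :=
  ∑ᶠ e ∈ pathEdges G x y, ω e

/-- Path edge set of an unordered pair. -/
def pairPathEdges (G : SimpleGraph U) (c : Sym2 U) : Set (Sym2 U) :=
  {e | e ∈ G.edgeSet ∧ ∀ x y : U, c = s(x, y) → ∀ p : G.Walk x y, e ∈ p.edges}

/-- `D_ω` on an unordered pair (a cord); `λ^T_c(ω)`. -/
def pdist (G : SimpleGraph U) (ω : Sym2 U → ℝ) (c : Sym2 U) : ℝ :=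
  ∑ᶠ e ∈ pairPathEdges G c, ω e

/-- `(G,ω)` and `(G',ω')` are `L`-isometric. -/
def LIso (L : Set (Sym2 U)) (G : SimpleGraph U) (ω : Sym2 U → ℝ)
    (G' : SimpleGraph U) (ω' : Sym2 U → ℝ) : Prop :=
  ∀ x y : U, s(x, y) ∈ L → tdist G ω x y = tdist G' ω' x y

/-- `L` is a set of cords of `X`: 2-element subsets of `X`. -/
def IsCordSet (X : Set U) (L : Set (Sym2 U)) : Prop :=
  ∀ c ∈ L, ¬ c.IsDiag ∧ ∀ u ∈ c, u ∈ X

/-- The union of all cords in `L`. -/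
def cup (L : Set (Sym2 U)) : Set U := {v | ∃ c ∈ L, v ∈ c}

/-- `L` is an edge-weight lasso for `G`. -/
def EdgeWeightLasso (G : SimpleGraph U) (L : Set (Sym2 U)) : Prop :=
  ∀ ω ω' : Sym2 U → ℝ, IsProperWeighting G ω → IsProperWeighting G ω' →
    LIso L G ω G ω' → ω = ω'

/-- `G ≃ G'` via a graph isomorphism fixing `X` pointwise. -/
def FixingIso (X : Set U) (G G' : SimpleGraph U) : Prop :=
  ∃ φ : G ≃g G', ∀ x ∈ X, φ x = x

/-- `(G,ω)` and `(G',ω')` are isometric: a graph isomorphism fixing `X`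
    pointwise and preserving edge weights. -/
def FixingIsometry (X : Set U) (G G' : SimpleGraph U) (ω ω' : Sym2 U → ℝ) : Prop :=
  ∃ φ : G ≃g G', (∀ x ∈ X, φ x = x) ∧
    ∀ e ∈ G.edgeSet, ω' (Sym2.map (fun u => φ u) e) = ω e

/-- `L` is a topological lasso for the `X`-tree `G`. -/
def TopologicalLasso (X : Set U) (G : SimpleGraph U) (L : Set (Sym2 U)) : Prop :=
  ∀ G' : SimpleGraph U, IsXTree X G' →
    ∀ ω ω' : Sym2 U → ℝ, IsProperWeighting G ω → IsProperWeighting G' ω' →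
      LIso L G ω G' ω' → FixingIso X G G'

/-- `L` is a strong lasso for the `X`-tree `G`. -/
def StrongLasso (X : Set U) (G : SimpleGraph U) (L : Set (Sym2 U)) : Prop :=
  ∀ G' : SimpleGraph U, IsXTree X G' →
    ∀ ω ω' : Sym2 U → ℝ, IsProperWeighting G ω → IsProperWeighting G' ω' →
      LIso L G ω G' ω' → FixingIsometry X G G' ω ω'

/-- `G` displays the quartet `a a' ‖ b b'`: some edge lies on all four paths
    joining `a` or `a'` to `b` or `b'`. -/
def DisplaysQ (G : SimpleGraph U) (a a' b b' : U) : Prop :=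
  ∃ e : Sym2 U, e ∈ pathEdges G a b ∧ e ∈ pathEdges G a b' ∧
    e ∈ pathEdges G a' b ∧ e ∈ pathEdges G a' b'

def Distinct4 (a b c d : U) : Prop :=
  a ≠ b ∧ a ≠ c ∧ a ≠ d ∧ b ≠ c ∧ b ≠ d ∧ c ≠ d

/-- `a a' ‖ b b' ∈ Q(G)`: a quartet on four distinct elements of `X`
    displayed by `G`. -/
def QuartetOf (X : Set U) (G : SimpleGraph U) (a a' b b' : U) : Prop :=
  a ∈ X ∧ a' ∈ X ∧ b ∈ X ∧ b' ∈ X ∧ Distinct4 a a' b b' ∧ DisplaysQ G a a' b b'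

/-- `G` displays `a a' | b b'`: it displays neither `a b ‖ a' b'` nor
    `a b' ‖ a' b`. -/
def DisplaysBar (G : SimpleGraph U) (a a' b b' : U) : Prop :=
  ¬ DisplaysQ G a b a' b' ∧ ¬ DisplaysQ G a b' a' b

/-- `A, B` is a virtual `T`-split of `X`. -/
def VirtualSplit (X : Set U) (G : SimpleGraph U) (A B : Set U) : Prop :=
  A.Nonempty ∧ B.Nonempty ∧ Disjoint A B ∧ A ∪ B = X ∧
    ∀ a ∈ A, ∀ a' ∈ A, ∀ b ∈ B, ∀ b' ∈ B, a ≠ a' → b ≠ b' → DisplaysBar G a a' b b'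

/-- `G ≤ G'` (`G'` refines `G`), via the standard characterization
    `Q(T) ⊆ Q(T')` of refinement of `X`-trees. -/
def Refines (X : Set U) (G G' : SimpleGraph U) : Prop :=
  ∀ a a' b b' : U, QuartetOf X G a a' b b' → QuartetOf X G' a a' b b'

/-- `L` is a weak lasso for (coralls) the `X`-tree `G`. -/
def WeakLasso (X : Set U) (G : SimpleGraph U) (L : Set (Sym2 U)) : Prop :=
  ∀ G' : SimpleGraph U, IsXTree X G' →
    ∀ ω ω' : Sym2 U → ℝ, IsProperWeighting G ω → IsProperWeighting G' ω' →
      LIso L G ω G' ω' → Refines X G G'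

/-- The subgraph induced on a vertex set `A`. -/
def restrict {α : Type*} (Γ : SimpleGraph α) (A : Set α) : SimpleGraph α where
  Adj u v := Γ.Adj u v ∧ u ∈ A ∧ v ∈ A
  symm := ⟨by rintro u v ⟨h, hu, hv⟩; exact ⟨h.symm, hv, hu⟩⟩
  loopless := ⟨by rintro v ⟨h, _, _⟩; exact Γ.loopless.irrefl v h⟩

/-- The restriction of `Γ` to `A` is a connected graph. -/
def ConnectedOn {α : Type*} (Γ : SimpleGraph α) (A : Set α) : Prop :=
  ∀ x ∈ A, ∀ y ∈ A, (restrict Γ A).Reachable x y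

/-- The connected component of `x` in `Γ` is bipartite. -/
def ComponentBipartite {α : Type*} (Γ : SimpleGraph α) (x : α) : Prop :=
  ∃ f : α → Bool, ∀ u v : α, Γ.Reachable x u → Γ.Adj u v → f u ≠ f v

/-- No connected component (of the graph with vertex set `S`) is bipartite. -/
def StronglyNonBipartite {α : Type*} (Γ : SimpleGraph α) (S : Set α) : Prop :=
  ∀ x ∈ S, ¬ ComponentBipartite Γ x

/-- The graph `Γ` is bipartite. -/
def Bipartite {α : Type*} (Γ : SimpleGraph α) : Prop :=
  ∃ f : α → Bool, ∀ u v : α, Γ.Adj u v → f u ≠ f v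

/-- `E_v`: the set of edges of `G` containing `v`. -/
def Ev (G : SimpleGraph U) (v : U) : Set (Sym2 U) := {e | e ∈ G.edgeSet ∧ v ∈ e}

/-- The graph `G(L,v)` on the edge set `E_v`: two distinct edges at `v` are
    adjacent if some cord of `L` has both on its path. -/
def covGraph (G : SimpleGraph U) (L : Set (Sym2 U)) (v : U) : SimpleGraph (Sym2 U) where
  Adj e e' := e ≠ e' ∧ e ∈ Ev G v ∧ e' ∈ Ev G v ∧
    ∃ x y : U, s(x, y) ∈ L ∧ e ∈ pathEdges G x y ∧ e' ∈ pathEdges G x y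
  symm := ⟨by
    rintro e e' ⟨hne, he, he', x, y, hc, hp, hp'⟩
    exact ⟨hne.symm, he', he, x, y, hc, hp', hp⟩⟩
  loopless := ⟨by rintro e ⟨hne, _⟩; exact hne rfl⟩

/-- `G(L,v)` is the complete graph on `E_v`. -/
def CompleteAt (G : SimpleGraph U) (L : Set (Sym2 U)) (v : U) : Prop :=
  ∀ e ∈ Ev G v, ∀ e' ∈ Ev G v, e ≠ e' → (covGraph G L v).Adj e e'

/-- `L` is a `t`-cover of `G`. -/
def TCover (X : Set U) (G : SimpleGraph U) (L : Set (Sym2 U)) : Prop :=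
  cup L = X ∧ ∀ v : U, Interior G v → CompleteAt G L v

/-- The graph `Γ(L, c)` for the cord `c = x x'`, with vertex set `X − {x,x'}`
    and edge set `L^(c)`. -/
def cordGraphC (X : Set U) (G : SimpleGraph U) (L : Set (Sym2 U)) (x x' : U) :
    SimpleGraph U where
  Adj y y' := y ≠ y' ∧ y ≠ x ∧ y ≠ x' ∧ y' ≠ x ∧ y' ≠ x' ∧
    s(y, y') ∈ L ∧ QuartetOf X G x x' y y' ∧
    ((s(x, y) ∈ L ∧ s(x', y') ∈ L) ∨ (s(x, y') ∈ L ∧ s(x', y) ∈ L))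
  symm := ⟨by
    rintro y y' ⟨hne, h1, h2, h3, h4, hL,
      ⟨hx1, hx2, hy1, hy2, ⟨d1, d2, d3, d4, d5, d6⟩, e, p1, p2, p3, p4⟩, hor⟩
    exact ⟨hne.symm, h3, h4, h1, h2, by rwa [Sym2.eq_swap],
      ⟨hx1, hx2, hy2, hy1, ⟨d1, d3, d2, d5, d4, d6.symm⟩, e, p2, p1, p4, p3⟩, hor.symm⟩⟩
  loopless := ⟨by rintro y ⟨hne, _⟩; exact hne rfl⟩

/-- `v` lies on the path of `G` from `x` to `y`. -/
def OnPath (G : SimpleGraph U) (x y v : U) : Prop :=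
  v = x ∨ v = y ∨ ∃ e ∈ pathEdges G x y, v ∈ e

/-- `v = med_G(a,b,c)`: `v` lies on all three pairwise paths. -/
def IsMedian (G : SimpleGraph U) (a b c v : U) : Prop :=
  OnPath G a b v ∧ OnPath G a c v ∧ OnPath G b c v

/-- `L` is a triplet cover of `G`. -/
def TripletCover (X : Set U) (G : SimpleGraph U) (L : Set (Sym2 U)) : Prop :=
  ∀ v : U, Interior G v → ∃ a b c : U, a ∈ X ∧ b ∈ X ∧ c ∈ X ∧
    a ≠ b ∧ a ≠ c ∧ b ≠ c ∧
    s(a, b) ∈ L ∧ s(a, c) ∈ L ∧ s(b, c) ∈ L ∧ IsMedian G a b c v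

/-- `L` is a pointed `x`-cover of `G`. -/
def PointedCover (X : Set U) (G : SimpleGraph U) (L : Set (Sym2 U)) (x : U) : Prop :=
  cup L = X ∧ (∀ v : U, Interior G v → CompleteAt G L v) ∧
    ∀ v : U, Interior G v → ∃ a b : U, a ≠ b ∧
      s(a, x) ∈ L ∧ s(b, x) ∈ L ∧ IsMedian G a b x v

/-- Every interior vertex has degree `3`. -/
def IsBinary (G : SimpleGraph U) : Prop := ∀ v : U, Interior G v → deg G v = 3

/-- `a, b` form a `T`-cherry with common neighbour `v`. -/
def IsCherry (G : SimpleGraph U) (a b v : U) : Prop :=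
  a ≠ b ∧ IsLeaf G a ∧ IsLeaf G b ∧ G.Adj a v ∧ G.Adj b v

/-- `a, b` form a proper `T`-cherry with common neighbour `v` of degree `3`. -/
def IsProperCherry (G : SimpleGraph U) (a b v : U) : Prop :=
  IsCherry G a b v ∧ deg G v = 3

/-- `W` is a `T`-core of `G`. -/
def IsCore (G : SimpleGraph U) (W : Set U) : Prop :=
  W.Nonempty ∧ W ⊆ G.support ∧
    (∀ a ∈ W, ∀ b ∈ W, (restrict G W).Reachable a b) ∧
    ∀ v ∈ W, deg (restrict G W) v = 1 ∨ deg (restrict G W) v = deg G v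

/-- `X_W`: the leaf set of the induced tree `T_W`. -/
def coreLeaves (G : SimpleGraph U) (W : Set U) : Set U :=
  {v | v ∈ W ∧ deg (restrict G W) v = 1}

/-- `g` is the gate of `x` in `W`: the vertex of `W` closest to `x`. -/
def IsGate (G : SimpleGraph U) (W : Set U) (x g : U) : Prop :=
  g ∈ W ∧ ∀ w ∈ W, OnPath G x w g

/-- `L_W`: the cords induced on the gates. -/
def gateCords (G : SimpleGraph U) (W : Set U) (L : Set (Sym2 U)) : Set (Sym2 U) :=
  {c | ∃ p q y y' : U, s(p, q) ∈ L ∧ IsGate G W p y ∧ IsGate G W q y' ∧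
       y ≠ y' ∧ c = s(y, y')}

/-- The gate map of the cherry reduction: `a, b ↦ v`, all else fixed. -/
def cherryMap (a b v : U) : U → U := fun p => if p = a ∨ p = b then v else p

/-- `L_U` for the cherry reduction at the proper cherry `a,b` with neighbour `v`. -/
def cherryLU (L : Set (Sym2 U)) (a b v : U) : Set (Sym2 U) :=
  {c | ∃ p q : U, s(p, q) ∈ L ∧ cherryMap a b v p ≠ cherryMap a b v q ∧
       c = s(cherryMap a b v p, cherryMap a b v q)}

/-- `X(a, L^{ab}) = {y : ay ∈ L − {ab}}`. -/
def sideSet (L : Set (Sym2 U)) (a b : U) : Set U :=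
  {y | s(a, y) ∈ L ∧ s(a, y) ≠ s(a, b)}

/-- `Σ_{c ∈ LU} ρ(c)·λ^{TU}_c = 0` as a linear form on `ℝ^{E_U}`. -/
def RhoAnnihilates (TU : SimpleGraph U) (LU : Set (Sym2 U)) (ρ : Sym2 U → ℝ) : Prop :=
  ∀ η : Sym2 U → ℝ, (∀ e, e ∉ TU.edgeSet → η e = 0) →
    ∑ᶠ c ∈ LU, ρ c * pdist TU η c = 0

/-- `D_ω(ab|cd)`. -/
def Dq (G : SimpleGraph U) (ω : Sym2 U → ℝ) (a b c d : U) : ℝ :=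
  max (tdist G ω a c + tdist G ω b d) (tdist G ω a d + tdist G ω b c)
    - tdist G ω a b - tdist G ω c d

/-- The star tree on `X` with central vertex `z`. -/
def starGraph (X : Set U) (z : U) : SimpleGraph U :=
  SimpleGraph.fromEdgeSet {c | ∃ x ∈ X, c = s(x, z)}

/-- `A ∨ B`: all cords with one end in `A` and the other in `B`. -/
def vee (A B : Set U) : Set (Sym2 U) := {c | ∃ a ∈ A, ∃ b ∈ B, c = s(a, b)}

/-- A `T`-shelling of `binom(X,2) − L` with cords `aᵢbᵢ` and pivots `pᵢ, qᵢ`. -/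
def IsShelling (X : Set U) (G : SimpleGraph U) (L : Set (Sym2 U)) (m : ℕ)
    (a b p q : Fin m → U) : Prop :=
  (∀ i, a i ∈ X ∧ b i ∈ X ∧ a i ≠ b i ∧ s(a i, b i) ∉ L) ∧
  Function.Injective (fun i => s(a i, b i)) ∧
  (∀ x y : U, x ∈ X → y ∈ X → x ≠ y → s(x, y) ∉ L → ∃ i, s(x, y) = s(a i, b i)) ∧
  ∀ i : Fin m,
    p i ∈ X ∧ q i ∈ X ∧ p i ≠ q i ∧
    p i ≠ a i ∧ p i ≠ b i ∧ q i ≠ a i ∧ q i ≠ b i ∧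
    DisplaysQ G (a i) (p i) (b i) (q i) ∧
    ∀ u w : U, u ∈ ({a i, b i, p i, q i} : Set U) → w ∈ ({a i, b i, p i, q i} : Set U) →
      u ≠ w → s(u, w) ≠ s(a i, b i) →
      (s(u, w) ∈ L ∨ ∃ j : Fin m, j < i ∧ s(u, w) = s(a j, b j))

/-- `L` is an `s`-lasso for `G`. -/
def SLasso (X : Set U) (G : SimpleGraph U) (L : Set (Sym2 U)) : Prop :=
  cup L = X ∧ ∃ (m : ℕ) (a b p q : Fin m → U), IsShelling X G L m a b p q

/-- `L'_{A,B}` of Corollary 3 (the cherry construction). -/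
def LAB (L' : Set (Sym2 U)) (X : Set U) (a b : U) (A B : Set U) : Set (Sym2 U) :=
  {c | c ∈ L' ∧ ∀ u ∈ c, u ∈ X ∧ u ≠ a ∧ u ≠ b} ∪
  {c | ∃ x ∈ A ∪ {b}, c = s(a, x)} ∪
  {c | ∃ x ∈ B, c = s(b, x)}

end Lasso
namespace Lasso


/- Auxiliary lemmas for Theorem 1. -/
section Aux

variable {G : SimpleGraph U}

lemma edgeSet_finite_of_support_finite (h : G.support.Finite) : G.edgeSet.Finite := by
  have hsub : G.edgeSet ⊆ (fun p : U × U => s(p.1, p.2)) '' (G.support ×ˢ G.support) := by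
    intro e he
    induction e with
    | _ a b =>
      refine ⟨(a, b), ⟨?_, ?_⟩, rfl⟩
      · exact (SimpleGraph.mem_support _).mpr ⟨b, he⟩
      · exact (SimpleGraph.mem_support _).mpr ⟨a, ((SimpleGraph.mem_edgeSet _).mp he).symm⟩
  exact ((h.prod h).image _).subset hsub

lemma pathEdges_subset_edgeSet (x y : U) : pathEdges G x y ⊆ G.edgeSet :=
  fun _ he => he.1

lemma firstEdge_mem {u w : U} (p : G.Walk u w) (hp : ¬ p.Nil) :
    s(u, p.getVert 1) ∈ p.edges := by
  cases p with
  | nil => simp at hp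
  | cons h q => simp

/-- A pendant edge at a leaf `x` is avoided by some walk between two vertices
different from `x`. -/
lemma exists_walk_pendant_not_mem {x v y z : U}
    (hdeg : deg G x = 1) (hy : y ≠ x) (hz : z ≠ x) (hr : G.Reachable y z) :
    ∃ p : G.Walk y z, s(x, v) ∉ p.edges := by
  obtain ⟨w⟩ := hr
  refine ⟨w.bypass, fun he => ?_⟩
  have hp : w.bypass.IsPath := w.bypass_isPath
  have hxs : x ∈ w.bypass.support := w.bypass.fst_mem_support_of_mem_edges he
  set p := w.bypass with hpdef
  have hspec := p.take_spec hxs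
  set p₁ := p.takeUntil x hxs with hp1
  set p₂ := p.dropUntil x hxs with hp2
  have h₁ : ¬ p₁.Nil := SimpleGraph.Walk.not_nil_of_ne hy
  have h₂ : ¬ p₂.Nil := SimpleGraph.Walk.not_nil_of_ne (fun h => hz h.symm)
  have h₁r : ¬ p₁.reverse.Nil := SimpleGraph.Walk.not_nil_of_ne (fun h => hy h.symm)
  -- the last edge of p₁ and the first edge of p₂ are both incident with x
  have e₁ : s(x, p₁.reverse.getVert 1) ∈ p₁.edges := by
    have := firstEdge_mem p₁.reverse h₁r
    rwa [SimpleGraph.Walk.edges_reverse, List.mem_reverse] at this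
  have e₂ : s(x, p₂.getVert 1) ∈ p₂.edges := firstEdge_mem p₂ h₂
  -- both give neighbours of x, but x has a unique neighbour
  obtain ⟨c, hc⟩ := Set.ncard_eq_one.mp hdeg
  have ha : p₁.reverse.getVert 1 ∈ G.neighborSet x := p₁.adj_of_mem_edges e₁
  have hb : p₂.getVert 1 ∈ G.neighborSet x := p₂.adj_of_mem_edges e₂
  rw [hc, Set.mem_singleton_iff] at ha hb
  rw [ha] at e₁
  rw [hb] at e₂
  -- contradiction with the path having no duplicate edges
  have hnodup : (p₁.append p₂).edges.Nodup := by
    rw [hspec]; exact hp.edges_nodup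
  rw [SimpleGraph.Walk.edges_append, List.nodup_append] at hnodup
  exact hnodup.2.2 _ e₁ _ e₂ rfl

lemma tdist_add (hfin : G.support.Finite) (ω η : Sym2 U → ℝ) (x y : U) :
    tdist G (fun e => ω e + η e) x y = tdist G ω x y + tdist G η x y :=
  finsum_mem_add_distrib <|
    ((edgeSet_finite_of_support_finite hfin).subset (pathEdges_subset_edgeSet x y))

lemma tdist_sub (hfin : G.support.Finite) (ω η : Sym2 U → ℝ) (x y : U) :
    tdist G (fun e => ω e - η e) x y = tdist G ω x y - tdist G η x y :=
  finsum_mem_sub_distrib _ _ <|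
    ((edgeSet_finite_of_support_finite hfin).subset (pathEdges_subset_edgeSet x y))

end Aux

/-- Theorem 1 (Dress–Huber–Steel): `L` is an edge-weight lasso for the
`X`-tree `T` iff `X = ⋃ L` and no non-zero `ω₀ ∈ ℝ^E` is annihilated by all
the linear maps `λ^T_{xy}` with `xy ∈ L`. -/
theorem edgeWeightLasso_iff_cup_and_no_kernel {U : Type}
    (X : Set U) (G : SimpleGraph U)
    (hXfin : X.Finite) (hX3 : 3 ≤ X.ncard) (hT : IsXTree X G)
    (L : Set (Sym2 U)) (hL : IsCordSet X L) :
    EdgeWeightLasso G L ↔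
      (cup L = X ∧
        ∀ ω₀ : Sym2 U → ℝ, (∀ e, e ∉ G.edgeSet → ω₀ e = 0) →
          (∀ x y : U, s(x, y) ∈ L → tdist G ω₀ x y = 0) → ω₀ = 0) := by
  have hEfin : G.edgeSet.Finite := edgeSet_finite_of_support_finite hT.support_finite
  constructor
  · intro hlasso
    constructor
    · -- cup L = X
      apply Set.eq_of_subset_of_subset
      · rintro u ⟨c, hcL, huc⟩
        exact (hL c hcL).2 u huc
      · -- every x ∈ X is in some cord of L
        by_contra hne
        rw [Set.not_subset] at hne
        obtain ⟨x, hxX, hxcup⟩ := hne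
        -- x is a leaf
        have hxleaf : IsLeaf G x := by
          have := hT.leaves_eq
          rw [this] at hxX
          exact hxX
        obtain ⟨v, hv⟩ := Set.ncard_eq_one.mp hxleaf
        have hvx : G.Adj x v := by
          have : v ∈ G.neighborSet x := by rw [hv]; exact rfl
          exact this
        set e : Sym2 U := s(x, v) with hedef
        have heE : e ∈ G.edgeSet := hvx
        -- two proper weightings differing only on e
        set ω : Sym2 U → ℝ := fun f => if f ∈ G.edgeSet then 1 else 0 with hωdef
        set ω' : Sym2 U → ℝ := fun f => ω f + (if f = e then 1 else 0) with hω'def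
        have hω : IsProperWeighting G ω := by
          refine ⟨⟨fun f => ?_, fun f hf => if_neg hf⟩, fun f hf _ => ?_⟩
          · by_cases h : f ∈ G.edgeSet <;> simp [hωdef, h]
          · simp [hωdef, hf]
        have hω' : IsProperWeighting G ω' := by
          refine ⟨⟨fun f => ?_, fun f hf => ?_⟩, fun f hf _ => ?_⟩
          · have h1 : (0:ℝ) ≤ ω f := hω.nonneg f
            have h2 : (0:ℝ) ≤ (if f = e then (1:ℝ) else 0) := by positivity
            simpa [hω'def] using add_nonneg h1 h2
          · have hne : f ≠ e := fun h => hf (h ▸ heE)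
            simp [hω'def, hωdef, hf, hne]
          · have h1 : (0:ℝ) < ω f := by simp [hωdef, hf]
            have h2 : (0:ℝ) ≤ (if f = e then (1:ℝ) else 0) := by positivity
            simpa [hω'def] using add_pos_of_pos_of_nonneg h1 h2
        have hiso : LIso L G ω G ω' := by
          intro y z hyz
          have hy : y ≠ x := fun h => hxcup ⟨s(y, z), hyz, by rw [← h]; exact Sym2.mem_mk_left y z⟩
          have hz : z ≠ x := fun h => hxcup ⟨s(y, z), hyz, by rw [← h]; exact Sym2.mem_mk_right y z⟩
          have hyX : y ∈ X := (hL _ hyz).2 y (Sym2.mem_mk_left y z)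
          have hzX : z ∈ X := (hL _ hyz).2 z (Sym2.mem_mk_right y z)
          have hysup : y ∈ G.support := by
            have : IsLeaf G y := by rw [hT.leaves_eq] at hyX; exact hyX
            obtain ⟨c, hc⟩ := Set.ncard_eq_one.mp this
            exact (SimpleGraph.mem_support _).mpr ⟨c, by
              have : c ∈ G.neighborSet y := by rw [hc]; exact rfl
              exact this⟩
          have hzsup : z ∈ G.support := by
            have : IsLeaf G z := by rw [hT.leaves_eq] at hzX; exact hzX
            obtain ⟨c, hc⟩ := Set.ncard_eq_one.mp this
            exact (SimpleGraph.mem_support _).mpr ⟨c, by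
              have : c ∈ G.neighborSet z := by rw [hc]; exact rfl
              exact this⟩
          have hreach : G.Reachable y z := hT.connected y hysup z hzsup
          obtain ⟨p, hpav⟩ := exists_walk_pendant_not_mem (v := v) hxleaf hy hz hreach
          have hemem : e ∉ pathEdges G y z := fun h => hpav (h.2 p)
          refine finsum_mem_congr rfl (fun f hf => ?_)
          have : f ≠ e := fun h => hemem (h ▸ hf)
          simp [hω'def, this]
        have := hlasso ω ω' hω hω' hiso
        have h1 : ω e = ω' e := congrFun this e
        simp [hω'def, hωdef, heE] at h1
    · -- trivial kernel
      intro ω₀ hω₀off hω₀L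
      set Efin := hEfin.toFinset with hEdef
      set C : ℝ := 1 + ∑ f ∈ Efin, |ω₀ f| with hCdef
      have hsumnn : (0:ℝ) ≤ ∑ f ∈ Efin, |ω₀ f| := Finset.sum_nonneg fun i _ => abs_nonneg _
      have hCbound : ∀ f ∈ G.edgeSet, |ω₀ f| + 1 ≤ C := by
        intro f hf
        have hmem : f ∈ Efin := hEfin.mem_toFinset.mpr hf
        have := Finset.single_le_sum (fun i _ => abs_nonneg (ω₀ i)) hmem
        rw [hCdef]; linarith
      set ω : Sym2 U → ℝ := fun f => if f ∈ G.edgeSet then C else 0 with hωdef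
      set ω' : Sym2 U → ℝ := fun f => ω f + ω₀ f with hω'def
      have hCpos : (0:ℝ) < C := by rw [hCdef]; linarith
      have hω : IsProperWeighting G ω := by
        refine ⟨⟨fun f => ?_, fun f hf => if_neg hf⟩, fun f hf _ => ?_⟩
        · by_cases h : f ∈ G.edgeSet <;> simp [hωdef, h, le_of_lt hCpos]
        · simp [hωdef, hf, hCpos]
      have hω'pos : ∀ f ∈ G.edgeSet, (0:ℝ) < ω' f := by
        intro f hf
        have h1 := hCbound f hf
        have h2 : -|ω₀ f| ≤ ω₀ f := neg_abs_le _
        have : ω f = C := if_pos hf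
        simp only [hω'def, this]
        linarith
      have hω' : IsProperWeighting G ω' := by
        refine ⟨⟨fun f => ?_, fun f hf => ?_⟩, fun f hf _ => hω'pos f hf⟩
        · by_cases h : f ∈ G.edgeSet
          · exact le_of_lt (hω'pos f h)
          · simp [hω'def, hωdef, h, hω₀off f h]
        · simp [hω'def, hωdef, hf, hω₀off f hf]
      have hiso : LIso L G ω G ω' := by
        intro y z hyz
        have : tdist G ω' y z = tdist G ω y z + tdist G ω₀ y z :=
          tdist_add hT.support_finite ω ω₀ y z
        rw [this, hω₀L y z hyz, add_zero]
      have := hlasso ω ω' hω hω' hiso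
      funext f
      have h1 : ω f = ω' f := congrFun this f
      simp only [hω'def] at h1
      simp only [Pi.zero_apply]
      linarith
  · rintro ⟨hcup, hker⟩ ω ω' hω hω' hiso
    set ω₀ : Sym2 U → ℝ := fun f => ω' f - ω f with hω₀def
    have h0 : ω₀ = 0 := by
      refine hker ω₀ (fun f hf => ?_) (fun y z hyz => ?_)
      · simp [hω₀def, hω.zero_off f hf, hω'.zero_off f hf]
      · have : tdist G ω₀ y z = tdist G ω' y z - tdist G ω y z :=
          tdist_sub hT.support_finite ω' ω y z
        rw [this, hiso y z hyz, sub_self]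
    funext f
    have := congrFun h0 f
    simp only [hω₀def, Pi.zero_apply] at this
    linarith


end Lasso
end
end

section
/- Let T* be the star tree on X, where |X| = n ≥ 4. If L ⊆ binom(X,2) is a topological lasso for T*, then L = binom(X,2); that is, no proper subset of binom(X,2) is a topological lasso for T*. -/
/- Common definitions for formalizing results of Dress, Huber & Steel,
   "Lassoing a phylogenetic tree I: Basic properties, shellings, and covers".

   Trees are modelled as simple graphs on an ambient vertex type `U`;
   the vertex set of the tree is the support of the graph (every vertex of a
   tree with at least two vertices has degree >= 1). -/

noncomputable section
open scoped Classical

namespace Lasso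

variable {U : Type}

lemma cross_edge {G : SimpleGraph U} {e : Sym2 U} {f : U → Prop}
    (hcross : ∀ u v, G.Adj u v → f u → ¬ f v → s(u, v) = e) :
    ∀ {a b : U} (p : G.Walk a b), f a → ¬ f b → e ∈ p.edges := by
  intro a b p
  induction p with
  | nil => intro ha hb; exact absurd ha hb
  | @cons u v w h q ih =>
    intro ha hb
    by_cases hv : f v
    · rw [SimpleGraph.Walk.edges_cons]
      exact List.mem_cons_of_mem _ (ih hv hb)
    · rw [SimpleGraph.Walk.edges_cons, ← hcross u v h ha hv]
      exact List.mem_cons_self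

lemma cycle_two_neighbors {G : SimpleGraph U} {v0 : U} {c : G.Walk v0 v0}
    (hc : c.IsCycle) {u : U} (hu : u ∈ c.support) :
    ∃ a b : U, a ≠ b ∧ G.Adj u a ∧ G.Adj u b := by
  have hc' : (c.rotate u hu).IsCycle := hc.rotate hu
  obtain ⟨v, h, q, hq⟩ := SimpleGraph.Walk.not_nil_iff.mp hc'.not_nil
  have hnodup : (c.rotate u hu).edges.Nodup := hc'.isCircuit.isTrail.edges_nodup
  rw [hq, SimpleGraph.Walk.edges_cons] at hnodup
  have hmem : s(u, v) ∉ q.edges := (List.nodup_cons.mp hnodup).1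
  have huv : u ≠ v := G.ne_of_adj h
  obtain ⟨b, hb, r, hr⟩ := SimpleGraph.Walk.exists_eq_cons_of_ne huv q.reverse
  refine ⟨v, b, ?_, h, hb⟩
  rintro rfl
  apply hmem
  have : s(u, v) ∈ q.reverse.edges := by
    rw [hr, SimpleGraph.Walk.edges_cons]; exact List.mem_cons_self
  rwa [SimpleGraph.Walk.edges_reverse, List.mem_reverse] at this

lemma acyclic_of_small {G : SimpleGraph U} (s : Finset U)
    (hcard : s.card ≤ 2)
    (hnb : ∀ u : U, u ∉ s → ∀ a b : U, G.Adj u a → G.Adj u b → a = b) :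
    G.IsAcyclic := by
  intro v c hc
  have hsub : ∀ u ∈ c.support, u ∈ s := by
    intro u hu
    by_contra hus
    obtain ⟨a, b, hab, ha, hb⟩ := cycle_two_neighbors hc hu
    exact hab (hnb u hus a b ha hb)
  have hn : c.support.tail.Nodup := hc.support_nodup
  have h3 := hc.three_le_length
  have h2 : c.support.length = c.length + 1 := SimpleGraph.Walk.length_support c
  have hlen : 3 ≤ c.support.tail.length := by
    rw [List.length_tail]; omega
  have hsub' : c.support.tail.toFinset ⊆ s := by
    intro u hu
    exact hsub u (List.mem_of_mem_tail (List.mem_toFinset.mp hu))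
  have := Finset.card_le_card hsub'
  rw [List.toFinset_card_of_nodup hn] at this
  omega

lemma pathEdges_comm (G : SimpleGraph U) (a b : U) :
    pathEdges G a b = pathEdges G b a := by
  ext e
  constructor <;> rintro ⟨he, hall⟩ <;> refine ⟨he, fun p => ?_⟩
  · have := hall p.reverse
    rwa [SimpleGraph.Walk.edges_reverse, List.mem_reverse] at this
  · have := hall p.reverse
    rwa [SimpleGraph.Walk.edges_reverse, List.mem_reverse] at this

lemma tdist_comm (G : SimpleGraph U) (ω : Sym2 U → ℝ) (a b : U) :
    tdist G ω a b = tdist G ω b a := by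
  unfold tdist
  rw [pathEdges_comm]
lemma star_missing_cord [Infinite U] (X : Set U) (z : U) (hz : z ∉ X)
    (hXfin : X.Finite) (hX4 : 4 ≤ X.ncard)
    (L : Set (Sym2 U)) (hL : IsCordSet X L)
    {x y : U} (hx : x ∈ X) (hy : y ∈ X) (hxy : x ≠ y) (hnL : s(x, y) ∉ L) :
    ¬ TopologicalLasso X (starGraph X z) L := by
  intro h
  obtain ⟨w, hw⟩ := ((hXfin.union (Set.finite_singleton z)).infinite_compl).nonempty
  have hwX : w ∉ X := fun hh => hw (Set.mem_union_left _ hh)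
  have hwz : w ≠ z := fun hh => hw (Set.mem_union_right _ (by simp [hh]))
  have hxz : x ≠ z := fun e => hz (e ▸ hx)
  have hyz : y ≠ z := fun e => hz (e ▸ hy)
  have hxw : x ≠ w := fun e => hwX (e ▸ hx)
  have hyw : y ≠ w := fun e => hwX (e ▸ hy)
  set S := starGraph X z with hS
  -- star adjacency
  have sadj : ∀ a b : U, S.Adj a b ↔ (a ∈ X ∧ b = z) ∨ (a = z ∧ b ∈ X) := by
    intro a b
    rw [hS, starGraph, SimpleGraph.fromEdgeSet_adj]
    constructor
    · rintro ⟨⟨u, hu, he⟩, hne⟩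
      rw [Sym2.eq_iff] at he
      rcases he with ⟨rfl, rfl⟩ | ⟨rfl, rfl⟩
      · exact Or.inl ⟨hu, rfl⟩
      · exact Or.inr ⟨rfl, hu⟩
    · rintro (⟨ha, rfl⟩ | ⟨rfl, hb⟩)
      · exact ⟨⟨a, ha, rfl⟩, fun e => hz (e ▸ ha)⟩
      · exact ⟨⟨b, hb, Sym2.eq_swap⟩, fun e => hz (e.symm ▸ hb)⟩
  have snbr : ∀ a ∈ X, ∀ b : U, S.Adj a b → b = z := by
    intro a ha b hb
    rcases (sadj a b).mp hb with ⟨_, rfl⟩ | ⟨rfl, _⟩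
    · rfl
    · exact absurd ha hz
  -- the alternative tree
  set E' : Set (Sym2 U) :=
    {e | e = s(x, w) ∨ e = s(y, w) ∨ e = s(w, z) ∨
      ∃ u, u ∈ X ∧ u ≠ x ∧ u ≠ y ∧ e = s(u, z)} with hE'
  set T' := SimpleGraph.fromEdgeSet E' with hT'
  have tadj : ∀ a b : U, T'.Adj a b ↔
      (s(a, b) = s(x, w) ∨ s(a, b) = s(y, w) ∨ s(a, b) = s(w, z) ∨
        ∃ u, u ∈ X ∧ u ≠ x ∧ u ≠ y ∧ s(a, b) = s(u, z)) ∧ a ≠ b := by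
    intro a b
    rw [hT', SimpleGraph.fromEdgeSet_adj]
    rfl
  -- neighbor uniqueness facts
  have tnbr1 : ∀ a, (a = x ∨ a = y) → ∀ b : U, T'.Adj a b → b = w := by
    rintro a ha b hb
    obtain ⟨hm, hne⟩ := (tadj a b).mp hb
    have haX : a ∈ X := by rcases ha with rfl | rfl <;> assumption
    have haz : a ≠ z := by rcases ha with rfl | rfl <;> assumption
    have haw : a ≠ w := by rcases ha with rfl | rfl <;> assumption
    rcases hm with he | he | he | ⟨u, hu1, hu2, hu3, he⟩ <;>
      rw [Sym2.eq_iff] at he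
    · rcases he with ⟨h1, rfl⟩ | ⟨rfl, rfl⟩
      · rfl
      · exact absurd rfl haw
    · rcases he with ⟨h1, rfl⟩ | ⟨rfl, rfl⟩
      · rfl
      · exact absurd rfl haw
    · rcases he with ⟨rfl, rfl⟩ | ⟨rfl, rfl⟩
      · exact absurd rfl haw
      · exact absurd rfl haz
    · rcases he with ⟨rfl, rfl⟩ | ⟨rfl, rfl⟩
      · rcases ha with rfl | rfl
        · exact absurd rfl hu2
        · exact absurd rfl hu3
      · exact absurd rfl haz
  have tnbrX : ∀ a, a ∈ X → a ≠ x → a ≠ y → ∀ b : U, T'.Adj a b → b = z := by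
    intro a haX hax hay b hb
    obtain ⟨hm, hne⟩ := (tadj a b).mp hb
    have haz : a ≠ z := fun e => hz (e ▸ haX)
    have haw : a ≠ w := fun e => hwX (e ▸ haX)
    rcases hm with he | he | he | ⟨u, hu1, hu2, hu3, he⟩ <;>
      rw [Sym2.eq_iff] at he
    · rcases he with ⟨rfl, rfl⟩ | ⟨rfl, rfl⟩
      · exact absurd rfl hax
      · exact absurd rfl haw
    · rcases he with ⟨rfl, rfl⟩ | ⟨rfl, rfl⟩
      · exact absurd rfl hay
      · exact absurd rfl haw
    · rcases he with ⟨rfl, rfl⟩ | ⟨rfl, rfl⟩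
      · exact absurd rfl haw
      · exact absurd rfl haz
    · rcases he with ⟨rfl, rfl⟩ | ⟨rfl, rfl⟩
      · rfl
      · exact absurd rfl haz
  have tnbrw : ∀ b : U, T'.Adj w b → b = x ∨ b = y ∨ b = z := by
    intro b hb
    obtain ⟨hm, hne⟩ := (tadj w b).mp hb
    rcases hm with he | he | he | ⟨u, hu1, hu2, hu3, he⟩ <;>
      rw [Sym2.eq_iff] at he
    · rcases he with ⟨rfl, rfl⟩ | ⟨h1, rfl⟩
      · exact absurd rfl hxw.symm
      · exact Or.inl rfl
    · rcases he with ⟨rfl, rfl⟩ | ⟨h1, rfl⟩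
      · exact absurd rfl hyw.symm
      · exact Or.inr (Or.inl rfl)
    · rcases he with ⟨h1, rfl⟩ | ⟨rfl, rfl⟩
      · exact Or.inr (Or.inr rfl)
      · exact absurd rfl hwz
    · rcases he with ⟨rfl, rfl⟩ | ⟨rfl, rfl⟩
      · exact absurd hu1 hwX
      · exact absurd rfl hwz
  have tnbrz : ∀ b : U, T'.Adj z b → b = w ∨ (b ∈ X ∧ b ≠ x ∧ b ≠ y) := by
    intro b hb
    obtain ⟨hm, hne⟩ := (tadj z b).mp hb
    rcases hm with he | he | he | ⟨u, hu1, hu2, hu3, he⟩ <;>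
      rw [Sym2.eq_iff] at he
    · rcases he with ⟨rfl, rfl⟩ | ⟨rfl, rfl⟩
      · exact absurd rfl hxz.symm
      · exact absurd rfl hwz
    · rcases he with ⟨rfl, rfl⟩ | ⟨rfl, rfl⟩
      · exact absurd rfl hyz.symm
      · exact absurd rfl hwz
    · rcases he with ⟨rfl, rfl⟩ | ⟨-, rfl⟩
      · exact absurd rfl hwz.symm
      · exact Or.inl rfl
    · rcases he with ⟨rfl, rfl⟩ | ⟨-, rfl⟩
      · exact absurd hu1 hz
      · exact Or.inr ⟨hu1, hu2, hu3⟩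
  have tnbr0 : ∀ v : U, v ∉ X → v ≠ z → v ≠ w → ∀ b : U, ¬ T'.Adj v b := by
    intro v hvX hvz hvw b hb
    obtain ⟨hm, hne⟩ := (tadj v b).mp hb
    rcases hm with he | he | he | ⟨u, hu1, hu2, hu3, he⟩ <;>
      rw [Sym2.eq_iff] at he
    · rcases he with ⟨rfl, rfl⟩ | ⟨rfl, rfl⟩
      · exact hvX hx
      · exact hvw rfl
    · rcases he with ⟨rfl, rfl⟩ | ⟨rfl, rfl⟩
      · exact hvX hy
      · exact hvw rfl
    · rcases he with ⟨rfl, rfl⟩ | ⟨rfl, rfl⟩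
      · exact hvw rfl
      · exact hvz rfl
    · rcases he with ⟨rfl, rfl⟩ | ⟨rfl, rfl⟩
      · exact hvX hu1
      · exact hvz rfl
  -- basic adjacencies in T'
  have axw : T'.Adj x w := (tadj x w).mpr ⟨Or.inl rfl, hxw⟩
  have ayw : T'.Adj y w := (tadj y w).mpr ⟨Or.inr (Or.inl rfl), hyw⟩
  have awz : T'.Adj w z := (tadj w z).mpr ⟨Or.inr (Or.inr (Or.inl rfl)), hwz⟩
  have aXz : ∀ a, a ∈ X → a ≠ x → a ≠ y → T'.Adj a z := by
    intro a ha hax hay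
    exact (tadj a z).mpr ⟨Or.inr (Or.inr (Or.inr ⟨a, ha, hax, hay, rfl⟩)),
      fun e => hz (e ▸ ha)⟩
  -- cardinalities
  have hpair_sub : ({x, y} : Set U) ⊆ X := by
    rintro t (rfl | rfl)
    exacts [hx, hy]
  have hdiffcard : (X \ {x, y}).ncard = X.ncard - 2 := by
    rw [Set.ncard_diff hpair_sub, Set.ncard_pair hxy]
  have hdifffin : (X \ {x, y}).Finite := hXfin.diff
  -- the weightings
  set ω : Sym2 U → ℝ := fun e => if e ∈ S.edgeSet then 1 else 0 with hω
  set ω' : Sym2 U → ℝ := fun e =>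
    if e = s(x, w) ∨ e = s(y, w) ∨ e = s(w, z) then 1/2
    else if e ∈ T'.edgeSet then 1 else 0 with hω'
  have eS : ∀ a ∈ X, s(a, z) ∈ S.edgeSet := fun a ha =>
    (SimpleGraph.mem_edgeSet _).mpr ((sadj a z).mpr (Or.inl ⟨ha, rfl⟩))
  have exw : s(x, w) ∈ T'.edgeSet := (SimpleGraph.mem_edgeSet _).mpr axw
  have eyw : s(y, w) ∈ T'.edgeSet := (SimpleGraph.mem_edgeSet _).mpr ayw
  have ewz : s(w, z) ∈ T'.edgeSet := (SimpleGraph.mem_edgeSet _).mpr awz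
  have ebz : ∀ b, b ∈ X → b ≠ x → b ≠ y → s(b, z) ∈ T'.edgeSet := fun b hb h1 h2 =>
    (SimpleGraph.mem_edgeSet _).mpr (aXz b hb h1 h2)
  have ωval : ∀ a ∈ X, ω (s(a, z)) = 1 := by
    intro a ha
    simp only [hω]
    rw [if_pos (eS a ha)]
  have ω'aw : ∀ a, (a = x ∨ a = y) → ω' (s(a, w)) = 1/2 := by
    rintro a (rfl | rfl)
    · simp only [hω']; norm_num
    · simp only [hω']; norm_num
  have ω'wz : ω' (s(w, z)) = 1/2 := by
    simp only [hω']; norm_num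
  have ω'bz : ∀ b, b ∈ X → b ≠ x → b ≠ y → ω' (s(b, z)) = 1 := by
    intro b hb hbx hby
    have hbz : b ≠ z := fun e => hz (e ▸ hb)
    have hbw : b ≠ w := fun e => hwX (e ▸ hb)
    simp only [hω']
    rw [if_neg, if_pos (ebz b hb hbx hby)]
    rintro (he | he | he) <;> rw [Sym2.eq_iff] at he <;> tauto
  -- proper weightings
  have hωp : IsProperWeighting S ω := by
    refine ⟨⟨?_, ?_⟩, ?_⟩
    · intro e; simp only [hω]; split <;> norm_num
    · intro e he; simp only [hω]; rw [if_neg he]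
    · intro e he _; simp only [hω]; rw [if_pos he]; norm_num
  have hω'p : IsProperWeighting T' ω' := by
    refine ⟨⟨?_, ?_⟩, ?_⟩
    · intro e; simp only [hω']; split
      · norm_num
      · split <;> norm_num
    · intro e he; simp only [hω']
      rw [if_neg, if_neg he]
      rintro (rfl | rfl | rfl)
      exacts [he exw, he eyw, he ewz]
    · intro e he _; simp only [hω']
      by_cases hc : e = s(x, w) ∨ e = s(y, w) ∨ e = s(w, z)
      · rw [if_pos hc]; norm_num
      · rw [if_neg hc, if_pos he]; norm_num
  -- path edge sets and distances in the star
  have sdist : ∀ a b : U, a ∈ X → b ∈ X → a ≠ b → tdist S ω a b = 2 := by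
    intro a b ha hb hab
    have haz : a ≠ z := fun e => hz (e ▸ ha)
    have hbz : b ≠ z := fun e => hz (e ▸ hb)
    have hadjaz : S.Adj a z := (sadj a z).mpr (Or.inl ⟨ha, rfl⟩)
    have hadjzb : S.Adj z b := (sadj z b).mpr (Or.inr ⟨rfl, hb⟩)
    have hpe : pathEdges S a b = {s(a, z), s(b, z)} := by
      ext e
      simp only [Set.mem_insert_iff, Set.mem_singleton_iff]
      constructor
      · rintro ⟨he, hall⟩
        have hh := hall (SimpleGraph.Walk.cons hadjaz
          (SimpleGraph.Walk.cons hadjzb SimpleGraph.Walk.nil))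
        simp only [SimpleGraph.Walk.edges_cons, SimpleGraph.Walk.edges_nil,
          List.mem_cons, List.not_mem_nil, or_false] at hh
        rcases hh with rfl | rfl
        · exact Or.inl rfl
        · exact Or.inr Sym2.eq_swap
      · rintro (rfl | rfl)
        · refine ⟨(SimpleGraph.mem_edgeSet _).mpr hadjaz, fun p => ?_⟩
          refine cross_edge (f := fun v => v = a) ?_ p rfl (fun e => hab e.symm)
          rintro u v huv rfl hv
          rw [snbr u ha v huv]
        · refine ⟨(SimpleGraph.mem_edgeSet _).mpr ((sadj b z).mpr (Or.inl ⟨hb, rfl⟩)),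
            fun p => ?_⟩
          refine cross_edge (f := fun v => ¬ v = b) ?_ p hab (fun hh => hh rfl)
          intro u v huv hu hv
          have hvb : v = b := not_not.mp hv
          subst hvb
          rw [snbr v hb u huv.symm, Sym2.eq_swap]
    have hne : s(a, z) ≠ s(b, z) := by
      intro he; rw [Sym2.eq_iff] at he; tauto
    show (∑ᶠ e ∈ pathEdges S a b, ω e) = 2
    rw [hpe, finsum_mem_pair hne, ωval a ha, ωval b hb]
    norm_num
  -- path edge sets and distances in T'
  have tpathA : ∀ a b : U, a ∈ X → a ≠ x → a ≠ y → b ∈ X → b ≠ x → b ≠ y → a ≠ b →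
      pathEdges T' a b = {s(a, z), s(b, z)} := by
    intro a b ha hax hay hb hbx hby hab
    have hadjaz : T'.Adj a z := aXz a ha hax hay
    have hadjzb : T'.Adj z b := (aXz b hb hbx hby).symm
    ext e
    simp only [Set.mem_insert_iff, Set.mem_singleton_iff]
    constructor
    · rintro ⟨he, hall⟩
      have hh := hall (SimpleGraph.Walk.cons hadjaz
        (SimpleGraph.Walk.cons hadjzb SimpleGraph.Walk.nil))
      simp only [SimpleGraph.Walk.edges_cons, SimpleGraph.Walk.edges_nil,
        List.mem_cons, List.not_mem_nil, or_false] at hh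
      rcases hh with rfl | rfl
      · exact Or.inl rfl
      · exact Or.inr Sym2.eq_swap
    · rintro (rfl | rfl)
      · refine ⟨(SimpleGraph.mem_edgeSet _).mpr hadjaz, fun p => ?_⟩
        refine cross_edge (f := fun v => v = a) ?_ p rfl (fun e => hab e.symm)
        rintro u v huv rfl hv
        rw [tnbrX u ha hax hay v huv]
      · refine ⟨ebz b hb hbx hby, fun p => ?_⟩
        refine cross_edge (f := fun v => ¬ v = b) ?_ p hab (fun hh => hh rfl)
        intro u v huv hu hv
        have hvb : v = b := not_not.mp hv
        subst hvb
        rw [tnbrX v hb hbx hby u huv.symm, Sym2.eq_swap]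
  have tpathB : ∀ a b : U, (a = x ∨ a = y) → b ∈ X → b ≠ x → b ≠ y →
      pathEdges T' a b = {s(a, w), s(w, z), s(b, z)} := by
    intro a b haxy hb hbx hby
    have haX : a ∈ X := by rcases haxy with rfl | rfl <;> assumption
    have hba : b ≠ a := by rcases haxy with rfl | rfl; exacts [hbx, hby]
    have hadjaw : T'.Adj a w := by rcases haxy with rfl | rfl; exacts [axw, ayw]
    have hadjzb : T'.Adj z b := (aXz b hb hbx hby).symm
    ext e
    simp only [Set.mem_insert_iff, Set.mem_singleton_iff]
    constructor
    · rintro ⟨he, hall⟩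
      have hh := hall (SimpleGraph.Walk.cons hadjaw (SimpleGraph.Walk.cons awz
        (SimpleGraph.Walk.cons hadjzb SimpleGraph.Walk.nil)))
      simp only [SimpleGraph.Walk.edges_cons, SimpleGraph.Walk.edges_nil,
        List.mem_cons, List.not_mem_nil, or_false] at hh
      rcases hh with rfl | rfl | rfl
      · exact Or.inl rfl
      · exact Or.inr (Or.inl rfl)
      · exact Or.inr (Or.inr Sym2.eq_swap)
    · rintro (rfl | rfl | rfl)
      · refine ⟨(SimpleGraph.mem_edgeSet _).mpr hadjaw, fun p => ?_⟩
        refine cross_edge (f := fun v => v = a) ?_ p rfl hba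
        rintro u v huv rfl hv
        rw [tnbr1 u haxy v huv]
      · refine ⟨ewz, fun p => ?_⟩
        refine cross_edge (f := fun v => v = x ∨ v = y ∨ v = w) ?_ p ?_ ?_
        · rintro u v huv (rfl | rfl | rfl) hv
          · exact absurd (Or.inr (Or.inr (tnbr1 u (Or.inl rfl) v huv))) hv
          · exact absurd (Or.inr (Or.inr (tnbr1 u (Or.inr rfl) v huv))) hv
          · rcases tnbrw v huv with rfl | rfl | rfl
            · exact absurd (Or.inl rfl) hv
            · exact absurd (Or.inr (Or.inl rfl)) hv
            · rfl
        · rcases haxy with rfl | rfl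
          · exact Or.inl rfl
          · exact Or.inr (Or.inl rfl)
        · rintro (rfl | rfl | rfl)
          · exact hbx rfl
          · exact hby rfl
          · exact hwX hb
      · refine ⟨ebz b hb hbx hby, fun p => ?_⟩
        refine cross_edge (f := fun v => ¬ v = b) ?_ p hba.symm (fun hh => hh rfl)
        intro u v huv hu hv
        have hvb : v = b := not_not.mp hv
        subst hvb
        rw [tnbrX v hb hbx hby u huv.symm, Sym2.eq_swap]
  have tripleSum : ∀ a b : U, (a = x ∨ a = y) → b ∈ X → b ≠ x → b ≠ y →
      (∑ᶠ e ∈ ({s(a, w), s(w, z), s(b, z)} : Set (Sym2 U)), ω' e) = 2 := by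
    intro a b haxy hb hbx hby
    have haX : a ∈ X := by rcases haxy with rfl | rfl <;> assumption
    have haz : a ≠ z := fun e => hz (e ▸ haX)
    have hbz : b ≠ z := fun e => hz (e ▸ hb)
    have hbw : b ≠ w := fun e => hwX (e ▸ hb)
    have hwb : w ≠ b := hbw.symm
    have d12 : s(a, w) ≠ s(w, z) := by
      intro he; rw [Sym2.eq_iff] at he; tauto
    have d13 : s(a, w) ≠ s(b, z) := by
      intro he; rw [Sym2.eq_iff] at he; tauto
    have d23 : s(w, z) ≠ s(b, z) := by
      intro he; rw [Sym2.eq_iff] at he; tauto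
    have hset : ({s(a, w), s(w, z), s(b, z)} : Set (Sym2 U)) =
        (({s(a, w), s(w, z), s(b, z)} : Finset (Sym2 U)) : Set (Sym2 U)) := by
      simp
    rw [hset, finsum_mem_coe_finset,
      Finset.sum_insert (by simp [d12, d13]),
      Finset.sum_insert (by simp [d23]), Finset.sum_singleton,
      ω'aw a haxy, ω'wz, ω'bz b hb hbx hby]
    norm_num
  have tdistT : ∀ a b : U, a ∈ X → b ∈ X → a ≠ b → ¬(a = x ∧ b = y) →
      ¬(a = y ∧ b = x) → tdist T' ω' a b = 2 := by
    intro a b ha hb hab hc1 hc2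
    by_cases haxy : a = x ∨ a = y
    · have hbx : b ≠ x := by
        rintro rfl
        rcases haxy with rfl | rfl
        · exact hab rfl
        · exact hc2 ⟨rfl, rfl⟩
      have hby : b ≠ y := by
        rintro rfl
        rcases haxy with rfl | rfl
        · exact hc1 ⟨rfl, rfl⟩
        · exact hab rfl
      show (∑ᶠ e ∈ pathEdges T' a b, ω' e) = 2
      rw [tpathB a b haxy hb hbx hby]
      exact tripleSum a b haxy hb hbx hby
    · push_neg at haxy
      by_cases hbxy : b = x ∨ b = y
      · have hab' : b ≠ a := hab.symm
        rw [tdist_comm]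
        show (∑ᶠ e ∈ pathEdges T' b a, ω' e) = 2
        rw [tpathB b a hbxy ha haxy.1 haxy.2]
        exact tripleSum b a hbxy ha haxy.1 haxy.2
      · push_neg at hbxy
        have haz : a ≠ z := fun e => hz (e ▸ ha)
        have hne : s(a, z) ≠ s(b, z) := by
          intro he; rw [Sym2.eq_iff] at he; tauto
        show (∑ᶠ e ∈ pathEdges T' a b, ω' e) = 2
        rw [tpathA a b ha haxy.1 haxy.2 hb hbxy.1 hbxy.2 hab,
          finsum_mem_pair hne, ω'bz a ha haxy.1 haxy.2, ω'bz b hb hbxy.1 hbxy.2]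
        norm_num
  -- neighbor sets and degrees in T'
  have nbx : T'.neighborSet x = {w} := by
    ext b
    simp only [SimpleGraph.mem_neighborSet, Set.mem_singleton_iff]
    exact ⟨tnbr1 x (Or.inl rfl) b, fun e => e ▸ axw⟩
  have nby : T'.neighborSet y = {w} := by
    ext b
    simp only [SimpleGraph.mem_neighborSet, Set.mem_singleton_iff]
    exact ⟨tnbr1 y (Or.inr rfl) b, fun e => e ▸ ayw⟩
  have nbu : ∀ u, u ∈ X → u ≠ x → u ≠ y → T'.neighborSet u = {z} := by
    intro u hu hux huy
    ext b
    simp only [SimpleGraph.mem_neighborSet, Set.mem_singleton_iff]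
    exact ⟨tnbrX u hu hux huy b, fun e => e ▸ aXz u hu hux huy⟩
  have nbw : T'.neighborSet w = {x, y, z} := by
    ext b
    simp only [SimpleGraph.mem_neighborSet, Set.mem_insert_iff, Set.mem_singleton_iff]
    constructor
    · exact tnbrw b
    · rintro (rfl | rfl | rfl)
      exacts [axw.symm, ayw.symm, awz]
  have nbz : T'.neighborSet z = insert w (X \ {x, y}) := by
    ext b
    simp only [SimpleGraph.mem_neighborSet, Set.mem_insert_iff, Set.mem_diff,
      Set.mem_insert_iff, Set.mem_singleton_iff]
    constructor
    · intro hb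
      rcases tnbrz b hb with rfl | ⟨h1, h2, h3⟩
      · exact Or.inl rfl
      · exact Or.inr ⟨h1, by tauto⟩
    · rintro (rfl | ⟨h1, h2⟩)
      · exact awz.symm
      · exact (aXz b h1 (fun e => h2 (Or.inl e)) (fun e => h2 (Or.inr e))).symm
  have nb0 : ∀ v, v ∉ X → v ≠ z → v ≠ w → T'.neighborSet v = ∅ := by
    intro v h1 h2 h3
    ext b
    simp only [SimpleGraph.mem_neighborSet, Set.mem_empty_iff_false, iff_false]
    exact tnbr0 v h1 h2 h3 b
  have degx : deg T' x = 1 := by rw [deg, nbx, Set.ncard_singleton]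
  have degy : deg T' y = 1 := by rw [deg, nby, Set.ncard_singleton]
  have degu : ∀ u, u ∈ X → u ≠ x → u ≠ y → deg T' u = 1 := by
    intro u h1 h2 h3; rw [deg, nbu u h1 h2 h3, Set.ncard_singleton]
  have degw : deg T' w = 3 := by
    rw [deg, nbw, Set.ncard_insert_of_notMem (by simp [hxy, hxz]),
      Set.ncard_insert_of_notMem (by simp [hyz]), Set.ncard_singleton]
  have degz : deg T' z = X.ncard - 1 := by
    rw [deg, nbz, Set.ncard_insert_of_notMem (fun hh => hwX hh.1) hdifffin, hdiffcard]
    omega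
  have deg0 : ∀ v, v ∉ X → v ≠ z → v ≠ w → deg T' v = 0 := by
    intro v h1 h2 h3; rw [deg, nb0 v h1 h2 h3, Set.ncard_empty]
  -- support of T'
  have hsupp : T'.support = X ∪ {z, w} := by
    ext v
    rw [SimpleGraph.mem_support]
    constructor
    · rintro ⟨b, hb⟩
      by_cases h1 : v ∈ X
      · exact Or.inl h1
      by_cases h2 : v = z
      · exact Or.inr (Or.inl h2)
      by_cases h3 : v = w
      · exact Or.inr (Or.inr h3)
      · exact absurd hb (tnbr0 v h1 h2 h3 b)
    · rintro (hv | rfl | rfl)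
      · by_cases h1 : v = x
        · exact ⟨w, h1 ▸ axw⟩
        by_cases h2 : v = y
        · exact ⟨w, h2 ▸ ayw⟩
        · exact ⟨z, aXz v hv h1 h2⟩
      · exact ⟨w, awz.symm⟩
      · exact ⟨z, awz⟩
  -- T' is an X-tree
  have hxt : IsXTree X T' := by
    constructor
    · rw [hsupp]
      exact hXfin.union ((Set.finite_singleton _).insert _)
    · exact ⟨z, by rw [hsupp]; exact Or.inr (Or.inl rfl)⟩
    · intro a ha b hb
      have reach : ∀ v ∈ T'.support, T'.Reachable v z := by
        intro v hv
        rw [hsupp] at hv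
        rcases hv with hv | rfl | rfl
        · by_cases h1 : v = x
          · exact h1 ▸ (axw.reachable.trans awz.reachable)
          by_cases h2 : v = y
          · exact h2 ▸ (ayw.reachable.trans awz.reachable)
          · exact (aXz v hv h1 h2).reachable
        · exact SimpleGraph.Reachable.refl _
        · exact awz.reachable
      exact (reach a ha).trans (reach b hb).symm
    · refine acyclic_of_small {z, w} (by
        refine le_trans (Finset.card_insert_le _ _) ?_
        simp) ?_
      intro u hu a b hadja hadjb
      simp only [Finset.mem_insert, Finset.mem_singleton, not_or] at hu
      by_cases huX : u ∈ X
      · by_cases hux : u = x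
        · subst hux
          rw [tnbr1 u (Or.inl rfl) a hadja, tnbr1 u (Or.inl rfl) b hadjb]
        by_cases huy : u = y
        · subst huy
          rw [tnbr1 u (Or.inr rfl) a hadja, tnbr1 u (Or.inr rfl) b hadjb]
        · rw [tnbrX u huX hux huy a hadja, tnbrX u huX hux huy b hadjb]
      · exact absurd hadja (tnbr0 u huX hu.1 hu.2 a)
    · intro v
      by_cases h1 : v ∈ X
      · by_cases h2 : v = x
        · rw [h2, degx]; omega
        by_cases h3 : v = y
        · rw [h3, degy]; omega
        · rw [degu v h1 h2 h3]; omega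
      by_cases h2 : v = z
      · rw [h2, degz]; omega
      by_cases h3 : v = w
      · rw [h3, degw]; omega
      · rw [deg0 v h1 h2 h3]; omega
    · ext v
      simp only [Set.mem_setOf_eq, IsLeaf]
      constructor
      · intro hv
        by_cases h2 : v = x
        · rw [h2, degx]
        by_cases h3 : v = y
        · rw [h3, degy]
        · exact degu v hv h2 h3
      · intro hv
        by_contra h1
        by_cases h2 : v = z
        · rw [h2, degz] at hv; omega
        by_cases h3 : v = w
        · rw [h3, degw] at hv; omega
        · rw [deg0 v h1 h2 h3] at hv; omega
  -- L-isometry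
  have hiso : LIso L S ω T' ω' := by
    intro a b hab
    obtain ⟨hnd, hm⟩ := hL _ hab
    have ha : a ∈ X := hm a (Sym2.mem_iff.mpr (Or.inl rfl))
    have hb : b ∈ X := hm b (Sym2.mem_iff.mpr (Or.inr rfl))
    have hne : a ≠ b := fun e => hnd (Sym2.mk_isDiag_iff.mpr e)
    have hc1 : ¬(a = x ∧ b = y) := by
      rintro ⟨rfl, rfl⟩; exact hnL hab
    have hc2 : ¬(a = y ∧ b = x) := by
      rintro ⟨rfl, rfl⟩; exact hnL (by rwa [Sym2.eq_swap] at hab)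
    rw [sdist a b ha hb hne, tdistT a b ha hb hne hc1 hc2]
  -- apply the lasso hypothesis and derive a contradiction
  obtain ⟨φ, hfix⟩ := h T' hxt ω ω' hωp hω'p hiso
  have hdne : (X \ {x, y}).Nonempty :=
    Set.nonempty_of_ncard_ne_zero (by rw [hdiffcard]; omega)
  obtain ⟨u, huX, hunot⟩ := hdne
  have hux : u ≠ x := fun e => hunot (by simp [e])
  have huy : u ≠ y := fun e => hunot (by simp [e])
  have h1 : T'.Adj (φ x) (φ z) := φ.map_adj_iff.mpr ((sadj x z).mpr (Or.inl ⟨hx, rfl⟩))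
  rw [hfix x hx] at h1
  have hφz : φ z = w := tnbr1 x (Or.inl rfl) _ h1
  have h2 : T'.Adj (φ u) (φ z) := φ.map_adj_iff.mpr ((sadj u z).mpr (Or.inl ⟨huX, rfl⟩))
  rw [hfix u huX] at h2
  have hφz' : φ z = z := tnbrX u huX hux huy _ h2
  exact hwz (hφz.symm.trans hφz')

/-- For the star tree `T*` on `X` with `|X| = n ≥ 4`: the only topological
lasso for `T*` is `binom(X,2)` itself. -/
theorem star_topologicalLasso_eq_all_cords {U : Type} [Infinite U]
    (X : Set U) (z : U) (hz : z ∉ X)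
    (hXfin : X.Finite) (hX4 : 4 ≤ X.ncard)
    (L : Set (Sym2 U)) (hL : IsCordSet X L)
    (h : TopologicalLasso X (starGraph X z) L) :
    L = {c : Sym2 U | ¬ c.IsDiag ∧ ∀ u ∈ c, u ∈ X} := by
  apply Set.Subset.antisymm
  · intro c hc
    exact ⟨(hL c hc).1, (hL c hc).2⟩
  · intro c
    induction c using Sym2.ind with
    | _ a b =>
      intro hc
      obtain ⟨hnd, hmem⟩ := hc
      have hab : a ≠ b := fun e => hnd (Sym2.mk_isDiag_iff.mpr e)
      have ha : a ∈ X := hmem a (Sym2.mem_iff.mpr (Or.inl rfl))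
      have hb : b ∈ X := hmem b (Sym2.mem_iff.mpr (Or.inr rfl))
      by_contra hcl
      exact star_missing_cord X z hz hXfin hX4 L hL ha hb hab hcl h
end Lasso
end
end
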